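/- Let a be a non-increasing, summable sequence of positive real numbers with tails rₙ^{(a)} and associated dimension function h_a, and suppose the inverse function h_a⁻¹ is doubling. Then every non-increasing summable positive sequence b that is weak tail-equivalent to a is in fact tail-equivalent to a: there exist constants c₁,c₂>0 with c₁ ≤ rₙ^{(b)}/rₙ^{(a)} ≤ c₂ for all n. -/

import Mathlib

open Set Filter Metric MeasureTheory
open scoped ENNReal NNReal Topology

noncomputable section

/-- The `h`-Hausdorff measure of `E ⊆ ℝ`:
`H^h(E) = lim_{δ→0⁺} inf {Σᵢ h(|Eᵢ|) : E ⊆ ⋃ᵢ Eᵢ, |Eᵢ| ≤ δ}`.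
Since the inner infimum is antitone in `δ`, the limit as `δ → 0⁺` is the
supremum over `0 < δ ≤ A` (the parameter `A` records the domain `(0,A]` of the
dimension function `h`; by monotonicity the value of the limit is unchanged). -/
def Hh (A : ℝ) (h : ℝ → ℝ≥0∞) (E : Set ℝ) : ℝ≥0∞ :=
  ⨆ (δ : ℝ) (_ : 0 < δ) (_ : δ ≤ A),
    ⨅ (t : ℕ → Set ℝ) (_ : E ⊆ ⋃ n, t n) (_ : ∀ n, Metric.diam (t n) ≤ δ),
      ∑' n, h (Metric.diam (t n))

/-- A `δ`-packing of `E`: a countable disjoint family of open balls centered at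
points of `E` with diameters less than `δ`, recorded as a set of
(center, radius) pairs. -/
def IsPacking (E : Set ℝ) (δ : ℝ) (P : Set (ℝ × ℝ)) : Prop :=
  P.Countable ∧ (∀ p ∈ P, p.1 ∈ E ∧ 0 < p.2 ∧ 2 * p.2 < δ) ∧
    P.PairwiseDisjoint fun p => Metric.ball p.1 p.2

/-- The `h`-packing pre-measure of `E ⊆ ℝ`:
`P₀^h(E) = lim_{δ→0⁺} sup {Σᵢ h(|Bᵢ|) : {Bᵢ} is a δ-packing of E}`.
The inner supremum is monotone in `δ`, so the limit as `δ → 0⁺` is the infimum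
over `0 < δ ≤ A`. -/
def P0h (A : ℝ) (h : ℝ → ℝ≥0∞) (E : Set ℝ) : ℝ≥0∞ :=
  ⨅ (δ : ℝ) (_ : 0 < δ) (_ : δ ≤ A),
    ⨆ (P : Set (ℝ × ℝ)) (_ : IsPacking E δ P), ∑' p : P, h (2 * (p : ℝ × ℝ).2)

/-- The `h`-packing measure: `P^h(E) = inf {Σᵢ P₀^h(Eᵢ) : E = ⋃ᵢ Eᵢ}`. -/
def Ph (A : ℝ) (h : ℝ → ℝ≥0∞) (E : Set ℝ) : ℝ≥0∞ :=
  ⨅ (t : ℕ → Set ℝ) (_ : E = ⋃ n, t n), ∑' n, P0h A h (t n)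

/-- `h` is a dimension function with domain `(0, A]`: continuous, increasing,
doubling, positive, with `h(x) → 0` as `x → 0⁺`.  We record partial functions
`(0,A] → (0,∞]` as functions `ℝ → ℝ≥0∞` extended by `0` on nonpositive
arguments (the continuous extension at `0`). -/
structure IsDimFun (A : ℝ) (h : ℝ → ℝ≥0∞) : Prop where
  posA : 0 < A
  zero_of_nonpos : ∀ x : ℝ, x ≤ 0 → h x = 0
  pos : ∀ x ∈ Set.Ioc (0 : ℝ) A, 0 < h x
  continuousOn : ContinuousOn h (Set.Ioc 0 A)
  strictMonoOn : StrictMonoOn h (Set.Ioc 0 A)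
  doubling : ∃ τ : ℝ≥0∞, 0 < τ ∧ τ ≠ ∞ ∧ ∀ x : ℝ, 0 < x → 2 * x ≤ A → τ * h (2 * x) ≤ h x
  tendsto_zero : Tendsto h (nhdsWithin 0 (Set.Ioi 0)) (nhds 0)

/-- `f ≼ h` on `(0, A]`: there is a (finite, positive) constant `c` with
`f(x) ≤ c·h(x)` for all `x ∈ (0,A]`. -/
def FLeq (A : ℝ) (f h : ℝ → ℝ≥0∞) : Prop :=
  ∃ c : ℝ≥0∞, 0 < c ∧ c ≠ ∞ ∧ ∀ x ∈ Set.Ioc (0 : ℝ) A, f x ≤ c * h x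

/-- `f ≡ h` on `(0, A]`: `f ≼ h` and `h ≼ f`. -/
def FEquiv (A : ℝ) (f h : ℝ → ℝ≥0∞) : Prop := FLeq A f h ∧ FLeq A h f

/-- Tail of a series: `rTail a n = Σ_{j ≥ n} a j` (0-based indexing, so the
paper's `r_n`, `n ≥ 1`, is `rTail a (n-1)`). -/
def rTail (a : ℕ → ℝ) (n : ℕ) : ℝ := ∑' k : ℕ, a (n + k)

/-- In the Cantor construction for the gap sequence `a`, the gaps are indexed
by the nodes `m ≥ 1` of the infinite binary tree in heap order (node `m` has
children `2m, 2m+1`), the gap at node `m` having length `a (m-1)`.  `nodeLen a m`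
is the sum of the lengths of all gaps in the subtree rooted at `m`, i.e. the
length of the step interval corresponding to node `m`. -/
def nodeLen (a : ℕ → ℝ) (m : ℕ) : ℝ :=
  ∑' k : ℕ, ∑ i ∈ Finset.range (2 ^ k), a (m * 2 ^ k + i - 1)

/-- Left endpoint of the `j`-th (0 ≤ j < 2^k, left to right) step-`k` interval
in the Cantor construction for the gap sequence `a` (realized in `[0, Σ a]`):
a left child keeps its parent's left endpoint; a right child's interval starts
after its left sibling's interval followed by the parent's gap. -/
def leftEnd (a : ℕ → ℝ) : ℕ → ℕ → ℝ
  | 0, _ => 0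
  | (k + 1), j =>
    if j % 2 = 0 then leftEnd a k (j / 2)
    else leftEnd a k (j / 2) + nodeLen a (2 ^ (k + 1) + j - 1) + a (2 ^ k + j / 2 - 1)

/-- The Cantor set `C_a` associated with a (positive, non-increasing, summable)
sequence `a`, realized inside the interval `[0, Σ a]`: the intersection over
`k` of the unions of the `2^k` step-`k` intervals. -/
def cantorSetOf (a : ℕ → ℝ) : Set ℝ :=
  ⋂ k : ℕ, ⋃ j ∈ Finset.range (2 ^ k),
    Set.Icc (leftEnd a k j) (leftEnd a k j + nodeLen a (2 ^ k + j))

/-- `h` (increasing and continuous on `(0, A]`) is associated to the sequence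
`a`: the sequence `{h(r_n/n)}` is equivalent to `{1/n}`, i.e. there are
constants `0 < c₁, c₂ < ∞` with `c₁ ≤ n · h(r_n/n) ≤ c₂` for all `n ≥ 1`
(0-based: `n ≥ 1` corresponds to `n+1` below). -/
def IsAssociated (A : ℝ) (h : ℝ → ℝ≥0∞) (a : ℕ → ℝ) : Prop :=
  ContinuousOn h (Set.Ioc 0 A) ∧ StrictMonoOn h (Set.Ioc 0 A) ∧
  ∃ c₁ c₂ : ℝ≥0∞, 0 < c₁ ∧ c₂ ≠ ∞ ∧ ∀ n : ℕ,
    c₁ ≤ ((n : ℝ≥0∞) + 1) * h (rTail a n / ((n : ℝ) + 1)) ∧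
    ((n : ℝ≥0∞) + 1) * h (rTail a n / ((n : ℝ) + 1)) ≤ c₂

/-- Weak tail-equivalence: there are positive integers `j, k` with
`r_n^{(a)} ≥ r_{jn}^{(b)}/j` and `r_n^{(b)} ≥ r_{kn}^{(a)}/k` for all `n ≥ 1`
(0-based shift: paper's `r_n` is `rTail · (n-1)`). -/
def WeakTailEquiv (a b : ℕ → ℝ) : Prop :=
  ∃ j k : ℕ, 0 < j ∧ 0 < k ∧
    (∀ n : ℕ, rTail b (j * (n + 1) - 1) / (j : ℝ) ≤ rTail a n) ∧
    (∀ n : ℕ, rTail a (k * (n + 1) - 1) / (k : ℝ) ≤ rTail b n)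

/-- Tail-equivalence: the sequences of tails are equivalent, i.e. the ratios
`r_n^{(a)}/r_n^{(b)}` are bounded above and below by positive constants. -/
def TailEquiv (a b : ℕ → ℝ) : Prop :=
  ∃ c₁ c₂ : ℝ, 0 < c₁ ∧ ∀ n : ℕ,
    c₁ ≤ rTail a n / rTail b n ∧ rTail a n / rTail b n ≤ c₂

/-- The Hausdorff dimension of `E`, computed from the `h_s`-Hausdorff measures,
`h_s(x) = x^s`:  `dim_H E = sup {s > 0 : H^{h_s}(E) = ∞}`. -/
def hausdDim (A : ℝ) (E : Set ℝ) : ℝ≥0∞ :=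
  ⨆ (s : ℝ) (_ : 0 < s) (_ : Hh A (fun x => ENNReal.ofReal (x ^ s)) E = ∞),
    ENNReal.ofReal s

/-- The packing dimension of `E`: `dim_P E = sup {s > 0 : P^{h_s}(E) = ∞}`. -/
def packDim (A : ℝ) (E : Set ℝ) : ℝ≥0∞ :=
  ⨆ (s : ℝ) (_ : 0 < s) (_ : Ph A (fun x => ENNReal.ofReal (x ^ s)) E = ∞),
    ENNReal.ofReal s

/-- The pre-packing dimension of `E`: `dim_{P₀} E = sup {s > 0 : P₀^{h_s}(E) = ∞}`. -/
def prePackDim (A : ℝ) (E : Set ℝ) : ℝ≥0∞ :=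
  ⨆ (s : ℝ) (_ : 0 < s) (_ : P0h A (fun x => ENNReal.ofReal (x ^ s)) E = ∞),
    ENNReal.ofReal s

/-- `f ≼ h` on the set `S`, for real-valued functions. -/
def RLeqOn (S : Set ℝ) (f h : ℝ → ℝ) : Prop :=
  ∃ c : ℝ, 0 < c ∧ ∀ x ∈ S, f x ≤ c * h x

/-- `f ≡ h` on the set `S`, for real-valued functions. -/
def REquivOn (S : Set ℝ) (f h : ℝ → ℝ) : Prop := RLeqOn S f h ∧ RLeqOn S h f

/-- Real-valued version of `IsAssociated`: `h : (0,A] → (0,∞)` is increasing,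
continuous, positive and `{h(r_n/n)} ≡ {1/n}`. -/
def IsAssociatedR (A : ℝ) (h : ℝ → ℝ) (a : ℕ → ℝ) : Prop :=
  ContinuousOn h (Set.Ioc 0 A) ∧ StrictMonoOn h (Set.Ioc 0 A) ∧
  (∀ x ∈ Set.Ioc (0 : ℝ) A, 0 < h x) ∧
  ∃ c₁ c₂ : ℝ, 0 < c₁ ∧ ∀ n : ℕ,
    c₁ ≤ ((n : ℝ) + 1) * h (rTail a n / ((n : ℝ) + 1)) ∧
    ((n : ℝ) + 1) * h (rTail a n / ((n : ℝ) + 1)) ≤ c₂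

end

section Aux

lemma rTail_summable {a : ℕ → ℝ} (asum : Summable a) (n : ℕ) :
    Summable fun k => a (n + k) := by
  have := (summable_nat_add_iff (f := a) n).2 asum
  simpa [add_comm] using this

lemma rTail_pos {a : ℕ → ℝ} (apos : ∀ n, 0 < a n) (asum : Summable a) (n : ℕ) :
    0 < rTail a n :=
  Summable.tsum_pos (rTail_summable asum n) (fun k => (apos _).le) 0 (apos _)

lemma rTail_succ {a : ℕ → ℝ} (asum : Summable a) (n : ℕ) :
    rTail a n = a n + rTail a (n + 1) := by
  rw [rTail, Summable.tsum_eq_zero_add (rTail_summable asum n), rTail]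
  have h : ∀ k, a (n + (k + 1)) = a (n + 1 + k) := fun k => by congr 1; omega
  simp [h]

lemma rTail_anti {a : ℕ → ℝ} (apos : ∀ n, 0 < a n) (asum : Summable a) :
    Antitone (rTail a) := by
  apply antitone_nat_of_succ_le
  intro n
  rw [rTail_succ asum n]
  nlinarith [apos n]

/-- Image of `(0, A]` under a continuous strictly monotone map containing
arbitrarily small values is all of `(0, ha A]`. -/
lemma mem_image_of_pos_le {A : ℝ} {ha : ℝ → ℝ}
    (hcont : ContinuousOn ha (Set.Ioc 0 A))
    (hsmall : ∀ ε : ℝ, 0 < ε → ∃ x ∈ Set.Ioc (0:ℝ) A, ha x < ε)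
    {t : ℝ} (ht : 0 < t) (htA : t ≤ ha A) : t ∈ ha '' Set.Ioc 0 A := by
  obtain ⟨x, hx, hxt⟩ := hsmall t ht
  have hsub : Set.Icc x A ⊆ Set.Ioc 0 A := fun z hz => ⟨lt_of_lt_of_le hx.1 hz.1, hz.2⟩
  have hIVT : Set.Icc (ha x) (ha A) ⊆ ha '' Set.Icc x A :=
    intermediate_value_Icc hx.2 (hcont.mono hsub)
  obtain ⟨z, hz, hzt⟩ := hIVT ⟨hxt.le, htA⟩
  exact ⟨z, hsub hz, hzt⟩

end Aux

/-- Theorem, (2) ⇒ (3): if the dimension function `h_a`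
associated to `a` has a doubling inverse `h_a⁻¹`, then every non-increasing
summable positive sequence `b` that is weak tail-equivalent to `a` is in fact
tail-equivalent to `a`: there are constants `0 < c₁ ≤ c₂` with
`c₁ ≤ rₙ^{(b)}/rₙ^{(a)} ≤ c₂` for all `n`. -/
theorem tailEquiv_of_weakTailEquiv_of_inv_doubling (A : ℝ) (hA : 0 < A)
    (a : ℕ → ℝ)
    (apos : ∀ n, 0 < a n) (amono : ∀ n, a (n + 1) ≤ a n) (asum : Summable a)
    (hra : rTail a 0 ≤ A)
    (ha ha' : ℝ → ℝ) (haa : IsAssociatedR A ha a)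
    (hinv : ∀ x ∈ Set.Ioc (0 : ℝ) A, ha' (ha x) = x)
    (hdoub : ∃ τ : ℝ, 0 < τ ∧ ∀ y : ℝ, y ∈ ha '' Set.Ioc (0 : ℝ) A →
      2 * y ∈ ha '' Set.Ioc (0 : ℝ) A → τ * ha' (2 * y) ≤ ha' y) :
    ∀ b : ℕ → ℝ, (∀ n, 0 < b n) → (∀ n, b (n + 1) ≤ b n) → Summable b →
      WeakTailEquiv a b → TailEquiv b a := by
  intro b bpos bmono bsum hw
  obtain ⟨hcont, hmono, hpos, c₁, c₂, hc₁, hassoc⟩ := haa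
  obtain ⟨τ₀, hτ₀, hdb⟩ := hdoub
  set τ : ℝ := min τ₀ 1 with hτdef
  have hτpos : 0 < τ := lt_min hτ₀ one_pos
  have hτ1 : τ ≤ 1 := min_le_right _ _
  have hτle : τ ≤ τ₀ := min_le_left _ _
  have hAmem : A ∈ Set.Ioc (0:ℝ) A := ⟨hA, le_refl A⟩
  -- the quotients rTail a n / (n+1) lie in (0, A]
  have hxmem : ∀ n : ℕ, rTail a n / ((n:ℝ)+1) ∈ Set.Ioc (0:ℝ) A := by
    intro n
    have h1 : 0 < rTail a n := rTail_pos apos asum n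
    have h2 : rTail a n ≤ A := le_trans (rTail_anti apos asum (Nat.zero_le n)) hra
    have h0 : (0:ℝ) ≤ (n:ℝ) := Nat.cast_nonneg n
    have h3 : (1:ℝ) ≤ (n:ℝ)+1 := by linarith
    exact ⟨by positivity, le_trans (div_le_self h1.le h3) h2⟩
  -- ha takes arbitrarily small values on (0, A]
  have hsmall : ∀ ε : ℝ, 0 < ε → ∃ x ∈ Set.Ioc (0:ℝ) A, ha x < ε := by
    intro ε hε
    obtain ⟨n, hn⟩ := exists_nat_gt (c₂ / ε)
    refine ⟨rTail a n / ((n:ℝ)+1), hxmem n, ?_⟩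
    have h := (hassoc n).2
    have hp := hpos _ (hxmem n)
    have h3 : (0:ℝ) < (n:ℝ)+1 := by positivity
    have hn' : c₂ < ε * ((n:ℝ)+1) := by
      have : c₂ / ε < (n:ℝ)+1 := lt_trans hn (lt_add_one _)
      rwa [div_lt_iff₀ hε, mul_comm] at this
    nlinarith
  -- main doubling claim
  have claim : ∀ m : ℕ, ∀ u v : ℝ, u ∈ Set.Ioc (0:ℝ) A → v ∈ Set.Ioc (0:ℝ) A →
      ha u ≤ 2^m * ha v → τ^m * u ≤ v := by
    intro m
    induction m with
    | zero =>
      intro u v hu hv h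
      have := (hmono.le_iff_le hu hv).1 (by simpa using h)
      simpa using this
    | succ m ih =>
      intro u v hu hv h
      by_cases hcase : ha u ≤ 2^m * ha v
      · have hih := ih u v hu hv hcase
        have hpm : (0:ℝ) < τ^m := pow_pos hτpos m
        calc τ^(m+1) * u = τ^m * τ * u := by ring
          _ ≤ τ^m * 1 * u := by
              exact mul_le_mul_of_nonneg_right
                (mul_le_mul_of_nonneg_left hτ1 hpm.le) hu.1.le
          _ = τ^m * u := by ring
          _ ≤ v := hih
      · push_neg at hcase
        have huApos : 0 < ha u := hpos u hu
        have huA : ha u ≤ ha A := hmono.monotoneOn hu hAmem hu.2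
        have hy : ha u / 2 ∈ ha '' Set.Ioc (0:ℝ) A :=
          mem_image_of_pos_le hcont hsmall (by linarith) (by linarith)
        obtain ⟨w, hw, hwy⟩ := hy
        have h2y : 2 * (ha u / 2) ∈ ha '' Set.Ioc (0:ℝ) A := ⟨u, hu, by ring⟩
        have hd := hdb (ha u / 2) (⟨w, hw, hwy⟩) h2y
        have e1 : 2 * (ha u / 2) = ha u := by ring
        rw [e1, hinv u hu, ← hwy, hinv w hw] at hd
        have hww : ha w ≤ 2^m * ha v := by
          rw [hwy]
          rw [pow_succ] at h
          linarith
        have hih := ih w v hw hv hww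
        have s1 : τ * u ≤ τ₀ * u := mul_le_mul_of_nonneg_right hτle hu.1.le
        have s2 : τ^m * (τ * u) ≤ τ^m * w :=
          mul_le_mul_of_nonneg_left (le_trans s1 hd) (pow_pos hτpos m).le
        calc τ^(m+1) * u = τ^m * (τ * u) := by ring
          _ ≤ τ^m * w := s2
          _ ≤ v := hih
  -- key tail-doubling lemma for `a`
  have key : ∀ J : ℕ, 0 < J → ∃ C : ℝ, 0 < C ∧ ∀ n : ℕ,
      C * (J:ℝ) * rTail a n ≤ rTail a (J * (n+1) - 1) := by
    intro J hJ
    obtain ⟨M, hM⟩ := pow_unbounded_of_one_lt (c₂ * (J:ℝ) / c₁) one_lt_two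
    refine ⟨τ^M, pow_pos hτpos M, ?_⟩
    intro n
    set N := J * (n+1) - 1 with hNdef
    have hN1 : N + 1 = J * (n+1) := by
      have : 1 ≤ J * (n+1) := Nat.one_le_iff_ne_zero.2 (by positivity)
      omega
    have hNc : ((N:ℝ) + 1) = (J:ℝ) * ((n:ℝ)+1) := by
      have : ((N:ℝ) + 1) = ((N + 1 : ℕ) : ℝ) := by push_cast; ring
      rw [this, hN1]; push_cast; ring
    have hu := hxmem n
    have hv := hxmem N
    have h1 := (hassoc n).2
    have h2 := (hassoc N).1
    have h2' : c₁ ≤ (J:ℝ)*((n:ℝ)+1) * ha (rTail a N / ((N:ℝ)+1)) := by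
      rw [← hNc]; exact h2
    have hJpos : (0:ℝ) < (J:ℝ) := by exact_mod_cast hJ
    have hn1 : (0:ℝ) < (n:ℝ)+1 := by positivity
    have hvpos : 0 < ha (rTail a N / ((N:ℝ)+1)) := hpos _ hv
    have hM' : c₂ * (J:ℝ) < 2^M * c₁ := by
      rw [div_lt_iff₀ hc₁] at hM; linarith
    have h2M : (0:ℝ) < 2^M := by positivity
    have hle : ha (rTail a n / ((n:ℝ)+1)) ≤ 2^M * ha (rTail a N / ((N:ℝ)+1)) := by
      have e2 : 2^M * c₁ ≤ 2^M * ((J:ℝ) * ((n:ℝ)+1) * ha (rTail a N / ((N:ℝ)+1))) :=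
        mul_le_mul_of_nonneg_left h2' h2M.le
      have e1 : (J:ℝ) * (((n:ℝ)+1) * ha (rTail a n / ((n:ℝ)+1))) ≤ (J:ℝ) * c₂ :=
        mul_le_mul_of_nonneg_left h1 hJpos.le
      have e3 : (J:ℝ) * ((n:ℝ)+1) * ha (rTail a n / ((n:ℝ)+1))
          ≤ (J:ℝ) * ((n:ℝ)+1) * (2^M * ha (rTail a N / ((N:ℝ)+1))) := by nlinarith
      have hJn : (0:ℝ) < (J:ℝ) * ((n:ℝ)+1) := by positivity
      exact le_of_mul_le_mul_left (by linarith [e3]) hJn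
    have hclaim := claim M _ _ hu hv hle
    rw [hNc] at hclaim
    have hJn : (0:ℝ) < (J:ℝ) * ((n:ℝ)+1) := by positivity
    have h3 := mul_le_mul_of_nonneg_right hclaim hJn.le
    rw [div_mul_cancel₀ _ hJn.ne'] at h3
    have e4 : τ^M * (rTail a n / ((n:ℝ)+1)) * ((J:ℝ) * ((n:ℝ)+1))
        = τ^M * (J:ℝ) * rTail a n := by field_simp
    rw [e4] at h3
    exact h3
  -- finish
  obtain ⟨j, k, hj, hk, hjb, hkb⟩ := hw
  obtain ⟨Ck, hCk, hkey_k⟩ := key k hk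
  obtain ⟨Cj, hCj, hkey_j⟩ := key (2*j) (by omega)
  have hkpos : (0:ℝ) < (k:ℝ) := by exact_mod_cast hk
  have hjpos : (0:ℝ) < (j:ℝ) := by exact_mod_cast hj
  refine ⟨Ck, max (rTail b 0 / rTail a (j-1)) (1/(2*Cj)), hCk, ?_⟩
  intro n
  have hrbn : 0 < rTail b n := rTail_pos bpos bsum n
  have hran : 0 < rTail a n := rTail_pos apos asum n
  constructor
  · -- lower bound
    have h1 := hkb n
    have h2 := hkey_k n
    rw [le_div_iff₀ hran]
    have h3 : rTail a (k*(n+1)-1) ≤ (k:ℝ) * rTail b n := by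
      rw [div_le_iff₀ hkpos] at h1; linarith
    nlinarith
  · -- upper bound
    rw [div_le_iff₀ hran]
    by_cases hcase : n + 1 < j
    · have e1 : rTail b n ≤ rTail b 0 := rTail_anti bpos bsum (Nat.zero_le n)
      have e2 : rTail a (j-1) ≤ rTail a n := rTail_anti apos asum (by omega)
      have e3 : 0 < rTail a (j-1) := rTail_pos apos asum _
      have e4 : rTail b n ≤ (rTail b 0 / rTail a (j-1)) * rTail a n := by
        rw [div_mul_eq_mul_div, le_div_iff₀ e3]
        nlinarith
      exact le_trans e4 (mul_le_mul_of_nonneg_right (le_max_left _ _) hran.le)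
    · push_neg at hcase
      set q := (n+1)/j with hqdef
      have hq : 0 < q := Nat.div_pos hcase hj
      set n' := q - 1 with hn'def
      have hqe : n' + 1 = q := by omega
      have hd1 : j * (n'+1) ≤ n + 1 := by
        rw [hqe, hqdef, Nat.mul_comm]
        exact Nat.div_mul_le_self (n+1) j
      have hd2 : n + 1 ≤ j * (n' + 2) := by
        have hmod := Nat.div_add_mod (n+1) j
        have hmlt : (n+1) % j < j := Nat.mod_lt _ hj
        calc n + 1 = j * q + (n+1) % j := hmod.symm
          _ ≤ j * q + j := by omega
          _ = j * (n' + 2) := by rw [← hqe]; ring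
      have s1 : rTail b n ≤ rTail b (j*(n'+1)-1) :=
        rTail_anti bpos bsum (Nat.sub_le_iff_le_add.2 hd1)
      have s2 := hjb n'
      have s3 := hkey_j n'
      have hd3 : n ≤ 2*j*(n'+1) - 1 := by
        have e : n + 1 ≤ 2*j*(n'+1) := by
          calc n + 1 ≤ j * (n'+2) := hd2
            _ ≤ j * (2*(n'+1)) := Nat.mul_le_mul_left j (by omega)
            _ = 2*j*(n'+1) := by ring
        omega
      have s4 : rTail a ((2*j)*(n'+1)-1) ≤ rTail a n := rTail_anti apos asum hd3
      have t1 : rTail b (j*(n'+1)-1) ≤ (j:ℝ) * rTail a n' := by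
        rw [div_le_iff₀ hjpos] at s2; linarith
      have t2 : Cj * (2*(j:ℝ)) * rTail a n' ≤ rTail a n := by
        push_cast at s3; linarith
      have t4 := mul_le_mul_of_nonneg_left (le_trans s1 t1)
        (by positivity : (0:ℝ) ≤ 2*Cj)
      have t3 : 2*Cj*rTail b n ≤ rTail a n := by nlinarith
      have t5 : rTail b n ≤ 1/(2*Cj) * rTail a n := by
        rw [div_mul_eq_mul_div, le_div_iff₀ (by positivity : (0:ℝ) < 2*Cj)]
        linarith
      exact le_trans t5 (mul_le_mul_of_nonneg_right (le_max_right _ _) hran.le)
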